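/- Let α, a, x, y, z, t ∈ ℂ with |xt| < 1, |zt| < 1 and |z t q^{α}| < 1, and suppose y ≠ x q^{j+1−n} for all integers n ≥ 1 and 0 ≤ j ≤ n−1 (so every p_k(y, x q^{1−n}) appearing below is nonzero). Then ∑_{n=0}^∞ (p_n(x,y) t^n/(q;q)_n) · ∑_{k=0}^n [n k]_q [α k]_{−q} (−1)^k q^{k(k−n)} (a;q)_k z^k / p_k(y, x q^{1−n}) converges absolutely and equals ((yt;q)_∞/(xt;q)_∞) · ₂Φ₁[−q^{−α}, a; −q; q; z t q^{α}]. -/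

import Mathlib

noncomputable section

/-- The q-shifted factorial `(a;q)_n`. -/
def qPoch (q a : ℂ) (n : ℕ) : ℂ := ∏ j ∈ Finset.range n, (1 - a * q ^ j)

/-- The infinite q-shifted factorial `(a;q)_∞`. -/
def qPochInf (q a : ℂ) : ℂ := ∏' j : ℕ, (1 - a * q ^ j)

/-- The q-binomial coefficient `[n k]_q`. -/
def qBinom (q : ℂ) (n k : ℕ) : ℂ := qPoch q q n / (qPoch q q k * qPoch q q (n - k))

/-- The Cauchy polynomials `p_n(x,y)`. -/
def cauchyP (q x y : ℂ) (n : ℕ) : ℂ := ∏ j ∈ Finset.range n, (x - q ^ j * y)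

/-- The generalized q-binomial coefficient `[α k]_{-q}`. -/
def genQBinom (q α : ℂ) (k : ℕ) : ℂ :=
  qPoch q (-(q ^ (-α))) k / qPoch q (-q) k * q ^ (α * (k : ℂ) - (k.choose 2 : ℂ))

/-- The generalized q-polynomials `L̃_n^{(r,s)}(α,x,y,z,a)`. -/
def Ltil (q : ℂ) (r s : ℤ) (α x y z a : ℂ) (n : ℕ) : ℂ :=
  ∑ k ∈ Finset.range (n + 1),
    qBinom q n k * genQBinom q α k *
      q ^ (r * (k.choose 2 : ℤ) - s * ((k + 1).choose 2 : ℤ) + (k.choose 2 : ℤ)) *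
      qPoch q a k * cauchyP q x y (n - k) * z ^ k

/-- The basic hypergeometric series `₂Φ₁[a,b;c;q;z]`. -/
def Phi21 (q a b c z : ℂ) : ℂ :=
  ∑' n : ℕ, qPoch q a n * qPoch q b n / (qPoch q c n * qPoch q q n) * z ^ n

/-- The basic hypergeometric series `₄Φ₃`. -/
def Phi43 (q a₁ a₂ a₃ a₄ b₁ b₂ b₃ z : ℂ) : ℂ :=
  ∑' n : ℕ, qPoch q a₁ n * qPoch q a₂ n * qPoch q a₃ n * qPoch q a₄ n /
    (qPoch q b₁ n * qPoch q b₂ n * qPoch q b₃ n * qPoch q q n) * z ^ n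

/-- The trivariate q-polynomials `F_n(x,y,z;q)`. -/
def Ftri (q x y z : ℂ) (n : ℕ) : ℂ :=
  (-1) ^ n * q ^ (-(n.choose 2 : ℤ)) *
    ∑ k ∈ Finset.range (n + 1),
      qBinom q n k * q ^ (k.choose 2) * (-z) ^ k * cauchyP q y x (n - k)

/-- The Hahn (Al-Salam–Carlitz) polynomials `φ_n^{(σ)}(x|q)`. -/
def hahnPhi (q σ x : ℂ) (n : ℕ) : ℂ :=
  ∑ k ∈ Finset.range (n + 1), qBinom q n k * qPoch q σ k * x ^ k

/-- The q-derivative operator `D_a`. -/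
def Dq (q : ℂ) (f : ℂ → ℂ) : ℂ → ℂ := fun a => (f a - f (q * a)) / a

/-- The homogeneous q-difference operator `D_{xy}`. -/
def Dxy (q : ℂ) (f : ℂ → ℂ → ℂ) : ℂ → ℂ → ℂ :=
  fun x y => (f x (y / q) - f (q * x) y) / (x - y / q)


section Stmt2Aux

open Finset Filter Complex Topology

variable {q : ℂ}

lemma qPoch_succ (q a : ℂ) (n : ℕ) : qPoch q a (n+1) = qPoch q a n * (1 - a * q ^ n) :=
  Finset.prod_range_succ _ _

lemma cauchyP_succ (q x y : ℂ) (n : ℕ) :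
    cauchyP q x y (n+1) = cauchyP q x y n * (x - q ^ n * y) :=
  Finset.prod_range_succ _ _

lemma one_sub_ne {u : ℂ} (h : ‖u‖ < 1) : (1 : ℂ) - u ≠ 0 := by
  intro h0
  have : u = 1 := by linear_combination -h0
  simp [this] at h

lemma qPoch_ne_zero (hq1 : ‖q‖ < 1) {a : ℂ} (ha : ‖a‖ < 1) (n : ℕ) : qPoch q a n ≠ 0 := by
  rw [qPoch, Finset.prod_ne_zero_iff]
  intro j _
  apply one_sub_ne
  rw [norm_mul, norm_pow]
  calc ‖a‖ * ‖q‖ ^ j ≤ ‖a‖ * 1 := by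
        gcongr
        exact pow_le_one₀ (norm_nonneg q) hq1.le
    _ < 1 := by simpa using ha

lemma summable_norm_of_ratio {F : ℕ → ℂ} {ρ : ℕ → ℝ} {L : ℝ} (hL : L < 1)
    (hρ : Tendsto ρ atTop (𝓝 L)) (h : ∀ k, ‖F (k+1)‖ ≤ ρ k * ‖F k‖) :
    Summable (fun k => ‖F k‖) := by
  set r : ℝ := (max L 0 + 1) / 2 with hr
  have hm1 : max L 0 < 1 := max_lt hL one_pos
  have hr1 : r < 1 := by rw [hr]; linarith
  have hLr : L < r := by
    have := le_max_left L 0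
    rw [hr]; linarith
  apply summable_of_ratio_norm_eventually_le hr1
  filter_upwards [hρ.eventually (gt_mem_nhds hLr)] with k hk
  rw [norm_norm, norm_norm]
  exact (h k).trans (mul_le_mul_of_nonneg_right hk.le (norm_nonneg _))

lemma tendsto_norm_one_sub (hq1 : ‖q‖ < 1) (c : ℂ) :
    Tendsto (fun k : ℕ => ‖1 - c * q ^ k‖) atTop (𝓝 1) := by
  have h : Tendsto (fun k : ℕ => (1:ℂ) - c * q ^ k) atTop (𝓝 (1 - c * 0)) :=
    tendsto_const_nhds.sub
      (tendsto_const_nhds.mul (tendsto_pow_atTop_nhds_zero_of_norm_lt_one hq1))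
  simpa using h.norm

lemma summable_g_norm (hq0 : q ≠ 0) (hq1 : ‖q‖ < 1) (x y t : ℂ) (hxt : ‖x * t‖ < 1) :
    Summable (fun n => ‖cauchyP q x y n * t ^ n / qPoch q q n‖) := by
  apply summable_norm_of_ratio (L := ‖x * t‖)
    (ρ := fun n => ‖x - q ^ n * y‖ * ‖t‖ / ‖1 - q * q ^ n‖) hxt
  · have h1 : Tendsto (fun n : ℕ => ‖x - q ^ n * y‖) atTop (𝓝 ‖x‖) := by
      have : Tendsto (fun n : ℕ => x - q ^ n * y) atTop (𝓝 (x - 0 * y)) :=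
        tendsto_const_nhds.sub ((tendsto_pow_atTop_nhds_zero_of_norm_lt_one hq1).mul_const y)
      simpa using this.norm
    have := (h1.mul_const ‖t‖).div (tendsto_norm_one_sub hq1 q) one_ne_zero
    simpa [norm_mul, Pi.div_def] using this
  · intro n
    have hqn : qPoch q q n ≠ 0 := qPoch_ne_zero hq1 hq1 n
    have hqn1 : (1:ℂ) - q * q ^ n ≠ 0 := by
      apply one_sub_ne
      rw [norm_mul, norm_pow]
      calc ‖q‖ * ‖q‖ ^ n ≤ ‖q‖ * 1 := by
            gcongr; exact pow_le_one₀ (norm_nonneg q) hq1.le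
        _ < 1 := by simpa using hq1
    have key : cauchyP q x y (n+1) * t ^ (n+1) / qPoch q q (n+1) =
        (x - q ^ n * y) * t / (1 - q * q ^ n) * (cauchyP q x y n * t ^ n / qPoch q q n) := by
      rw [cauchyP_succ, qPoch_succ]
      field_simp
      ring
    rw [key, norm_mul, norm_div, norm_mul]

lemma summable_f_norm (hq0 : q ≠ 0) (hq1 : ‖q‖ < 1) (α a z t : ℂ)
    (hw : ‖z * t * q ^ α‖ < 1) :
    Summable (fun k => ‖qPoch q (-(q ^ (-α))) k * qPoch q a k /
      (qPoch q (-q) k * qPoch q q k) * (z * t * q ^ α) ^ k‖) := by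
  apply summable_norm_of_ratio (L := ‖z * t * q ^ α‖)
    (ρ := fun k => ‖1 - -(q ^ (-α)) * q ^ k‖ * ‖1 - a * q ^ k‖ /
      (‖1 - -q * q ^ k‖ * ‖1 - q * q ^ k‖) * ‖z * t * q ^ α‖) hw
  · have h := (((tendsto_norm_one_sub hq1 (-(q ^ (-α)))).mul
      (tendsto_norm_one_sub hq1 a)).div
      ((tendsto_norm_one_sub hq1 (-q)).mul (tendsto_norm_one_sub hq1 q))
      (by norm_num)).mul_const ‖z * t * q ^ α‖
    simpa using h
  · intro k
    have hqk : qPoch q q k ≠ 0 := qPoch_ne_zero hq1 hq1 k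
    have hnqk : qPoch q (-q) k ≠ 0 := qPoch_ne_zero hq1 (by simpa using hq1) k
    have h1 : (1:ℂ) - -q * q ^ k ≠ 0 := by
      apply one_sub_ne
      rw [norm_mul, norm_neg, norm_pow]
      calc ‖q‖ * ‖q‖ ^ k ≤ ‖q‖ * 1 := by
            gcongr; exact pow_le_one₀ (norm_nonneg q) hq1.le
        _ < 1 := by simpa using hq1
    have h2 : (1:ℂ) - q * q ^ k ≠ 0 := by
      apply one_sub_ne
      rw [norm_mul, norm_pow]
      calc ‖q‖ * ‖q‖ ^ k ≤ ‖q‖ * 1 := by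
            gcongr; exact pow_le_one₀ (norm_nonneg q) hq1.le
        _ < 1 := by simpa using hq1
    have key : qPoch q (-(q ^ (-α))) (k+1) * qPoch q a (k+1) /
        (qPoch q (-q) (k+1) * qPoch q q (k+1)) * (z * t * q ^ α) ^ (k+1) =
        ((1 - -(q ^ (-α)) * q ^ k) * (1 - a * q ^ k) /
          ((1 - -q * q ^ k) * (1 - q * q ^ k)) * (z * t * q ^ α)) *
        (qPoch q (-(q ^ (-α))) k * qPoch q a k /
          (qPoch q (-q) k * qPoch q q k) * (z * t * q ^ α) ^ k) := by
      rw [qPoch_succ, qPoch_succ, qPoch_succ, qPoch_succ]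
      field_simp
      ring
    rw [key, norm_mul, norm_mul, norm_div, norm_mul, norm_mul]

lemma choose_two_cast (k : ℕ) : ((k.choose 2 : ℕ) : ℤ) * 2 = (k : ℤ) * ((k : ℤ) - 1) := by
  induction k with
  | zero => simp
  | succ k ih =>
    have h : (k+1).choose 2 = k.choose 1 + k.choose 2 := Nat.choose_succ_succ k 1
    rw [h, Nat.choose_one_right]
    push_cast
    push_cast at ih
    linear_combination ih

lemma sum_range_exp (n k : ℕ) :
    ∑ j ∈ Finset.range k, ((j : ℤ) + 1 - (n : ℤ)) =
      (k.choose 2 : ℤ) + (k : ℤ) * (1 - (n : ℤ)) := by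
  induction k with
  | zero => simp
  | succ k ih =>
    rw [Finset.sum_range_succ, ih]
    have h : (k+1).choose 2 = k.choose 1 + k.choose 2 := Nat.choose_succ_succ k 1
    rw [h, Nat.choose_one_right]
    push_cast
    ring

lemma prod_zpow' (hq0 : q ≠ 0) (e : ℕ → ℤ) (k : ℕ) :
    ∏ j ∈ Finset.range k, q ^ (e j) = q ^ (∑ j ∈ Finset.range k, e j) := by
  induction k with
  | zero => simp
  | succ k ih => rw [Finset.prod_range_succ, Finset.sum_range_succ, ih, zpow_add₀ hq0]

lemma qpow_shift (hq0 : q ≠ 0) (x : ℂ) (j n : ℕ) :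
    (q : ℂ) ^ j * (x * q ^ (1 - (n : ℤ))) = x * q ^ ((j : ℤ) + 1 - (n : ℤ)) := by
  rw [← zpow_natCast q j, show (j : ℤ) + 1 - (n : ℤ) = (j : ℤ) + (1 - (n : ℤ)) by ring,
    zpow_add₀ hq0]
  ring

lemma key_lemma (hq0 : q ≠ 0) (x y : ℂ) {k n : ℕ} (hkn : k ≤ n) :
    cauchyP q y (x * q ^ (1 - (n : ℤ))) k * cauchyP q x y (n - k) =
      (-1) ^ k * q ^ ((k.choose 2 : ℤ) + (k : ℤ) * (1 - (n : ℤ))) * cauchyP q x y n := by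
  have hB : cauchyP q x y n =
      cauchyP q x y (n - k) * ∏ j ∈ Finset.range k, (x - q ^ (n - k + j) * y) := by
    have hnn : n = (n - k) + k := by omega
    conv_lhs => rw [hnn]
    rw [cauchyP, Finset.prod_range_add]
    rfl
  have hA : cauchyP q y (x * q ^ (1 - (n : ℤ))) k =
      ((-1) ^ k * q ^ ((k.choose 2 : ℤ) + (k : ℤ) * (1 - (n : ℤ)))) *
        ∏ j ∈ Finset.range k, (x - q ^ (n - k + j) * y) := by
    have hstep : ∀ j ∈ Finset.range k,
        (y - q ^ j * (x * q ^ (1 - (n : ℤ)))) =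
          (-1) * q ^ ((j : ℤ) + 1 - (n : ℤ)) * (x - q ^ (n - 1 - j) * y) := by
      intro j hj
      have hjk : j < k := Finset.mem_range.mp hj
      have e2 : (q : ℂ) ^ (n - 1 - j : ℕ) = q ^ ((n : ℤ) - 1 - (j : ℤ)) := by
        rw [← zpow_natCast]; congr 1; omega
      have e3 : q ^ ((j : ℤ) + 1 - (n : ℤ)) * q ^ ((n : ℤ) - 1 - (j : ℤ)) = 1 := by
        rw [← zpow_add₀ hq0, show (j:ℤ) + 1 - (n:ℤ) + ((n:ℤ) - 1 - (j:ℤ)) = 0 by ring,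
          zpow_zero]
      rw [qpow_shift hq0 x j n, e2]
      linear_combination (-y) * e3
    rw [cauchyP, Finset.prod_congr rfl hstep, Finset.prod_mul_distrib,
      Finset.prod_mul_distrib, Finset.prod_const, Finset.card_range,
      prod_zpow' hq0, sum_range_exp]
    congr 1
    rw [← Finset.prod_range_reflect (fun j => x - q ^ (n - k + j) * y) k]
    apply Finset.prod_congr rfl
    intro j hj
    have hjk : j < k := Finset.mem_range.mp hj
    have : n - 1 - j = n - k + (k - 1 - j) := by omega
    rw [this]
  rw [hA, hB]
  ring

lemma term_eq (hq0 : q ≠ 0) (hq1 : ‖q‖ < 1) (α a x y z t : ℂ)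
    (hy : ∀ n : ℕ, 1 ≤ n → ∀ j : ℕ, j < n → y ≠ x * q ^ ((j : ℤ) + 1 - (n : ℤ)))
    (n : ℕ) :
    cauchyP q x y n * t ^ n / qPoch q q n *
        ∑ k ∈ Finset.range (n + 1), qBinom q n k * genQBinom q α k * (-1) ^ k *
          q ^ ((k : ℤ) * ((k : ℤ) - (n : ℤ))) * qPoch q a k * z ^ k /
          cauchyP q y (x * q ^ (1 - (n : ℤ))) k =
      ∑ k ∈ Finset.range (n + 1),
        (qPoch q (-(q ^ (-α))) k * qPoch q a k / (qPoch q (-q) k * qPoch q q k) *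
          (z * t * q ^ α) ^ k) *
        (cauchyP q x y (n - k) * t ^ (n - k) / qPoch q q (n - k)) := by
  rw [Finset.mul_sum]
  apply Finset.sum_congr rfl
  intro k hk
  have hkn : k ≤ n := by have := Finset.mem_range.mp hk; omega
  have hP : cauchyP q y (x * q ^ (1 - (n : ℤ))) k ≠ 0 := by
    rw [cauchyP, Finset.prod_ne_zero_iff]
    intro j hj
    have hjk : j < k := Finset.mem_range.mp hj
    have hn1 : 1 ≤ n := by omega
    have hne := hy n hn1 j (by omega)
    rw [qpow_shift hq0 x j n]
    exact sub_ne_zero.mpr hne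
  have hgen : genQBinom q α k =
      qPoch q (-(q ^ (-α))) k / qPoch q (-q) k * ((q ^ α) ^ k / q ^ (k.choose 2)) := by
    rw [genQBinom]
    congr 1
    rw [Complex.cpow_sub _ _ hq0, Complex.cpow_natCast]
    congr 1
    rw [mul_comm α ((k : ℕ) : ℂ), Complex.cpow_nat_mul]
  have hqn : qPoch q q n ≠ 0 := qPoch_ne_zero hq1 hq1 n
  have hqk : qPoch q q k ≠ 0 := qPoch_ne_zero hq1 hq1 k
  have hqm : qPoch q q (n - k) ≠ 0 := qPoch_ne_zero hq1 hq1 (n - k)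
  have hnqk : qPoch q (-q) k ≠ 0 := qPoch_ne_zero hq1 (by simpa using hq1) k
  have hqC : (q : ℂ) ^ (k.choose 2) ≠ 0 := pow_ne_zero _ hq0
  -- key identity, fraction form
  have hsplit : q ^ ((k : ℤ) * ((k : ℤ) - (n : ℤ))) =
      q ^ ((k.choose 2 : ℤ) + (k : ℤ) * (1 - (n : ℤ))) * q ^ (k.choose 2) := by
    rw [← zpow_natCast q (k.choose 2), ← zpow_add₀ hq0]
    congr 1
    linear_combination - choose_two_cast k
  have hk2 : cauchyP q x y n * ((-1) ^ k * q ^ ((k : ℤ) * ((k : ℤ) - (n : ℤ)))) =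
      cauchyP q x y (n - k) * q ^ (k.choose 2) * cauchyP q y (x * q ^ (1 - (n : ℤ))) k := by
    have hkey := key_lemma hq0 x y hkn
    rw [hsplit]
    linear_combination (-(q ^ (k.choose 2)) : ℂ) * hkey
  have hfr : cauchyP q x y n * ((-1) ^ k * q ^ ((k : ℤ) * ((k : ℤ) - (n : ℤ)))) /
      cauchyP q y (x * q ^ (1 - (n : ℤ))) k =
      cauchyP q x y (n - k) * q ^ (k.choose 2) := by
    rw [hk2]
    field_simp
  have htn : t ^ n = t ^ k * t ^ (n - k) := by
    rw [← pow_add]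
    congr 1
    omega
  rw [hgen, qBinom]
  calc cauchyP q x y n * t ^ n / qPoch q q n *
        (qPoch q q n / (qPoch q q k * qPoch q q (n - k)) *
          (qPoch q (-(q ^ (-α))) k / qPoch q (-q) k * ((q ^ α) ^ k / q ^ (k.choose 2))) *
          (-1) ^ k * q ^ ((k : ℤ) * ((k : ℤ) - (n : ℤ))) * qPoch q a k * z ^ k /
          cauchyP q y (x * q ^ (1 - (n : ℤ))) k)
      = (cauchyP q x y n * ((-1) ^ k * q ^ ((k : ℤ) * ((k : ℤ) - (n : ℤ)))) /
          cauchyP q y (x * q ^ (1 - (n : ℤ))) k) *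
        (t ^ n / qPoch q q n * (qPoch q q n / (qPoch q q k * qPoch q q (n - k))) *
          (qPoch q (-(q ^ (-α))) k / qPoch q (-q) k) * ((q ^ α) ^ k / q ^ (k.choose 2)) *
          qPoch q a k * z ^ k) := by ring
    _ = (cauchyP q x y (n - k) * q ^ (k.choose 2)) *
        (t ^ n / qPoch q q n * (qPoch q q n / (qPoch q q k * qPoch q q (n - k))) *
          (qPoch q (-(q ^ (-α))) k / qPoch q (-q) k) * ((q ^ α) ^ k / q ^ (k.choose 2)) *
          qPoch q a k * z ^ k) := by rw [hfr]
    _ = (qPoch q (-(q ^ (-α))) k * qPoch q a k / (qPoch q (-q) k * qPoch q q k) *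
          (z * t * q ^ α) ^ k) *
        (cauchyP q x y (n - k) * t ^ (n - k) / qPoch q q (n - k)) := by
      rw [htn]
      field_simp
      ring

lemma tendsto_prodN (hq1 : ‖q‖ < 1) (w : ℂ) :
    Tendsto (fun N => ∏ j ∈ Finset.range N, (1 - w * q ^ j)) atTop (𝓝 (qPochInf q w)) := by
  by_cases hz : ∃ j : ℕ, (1 : ℂ) - w * q ^ j = 0
  · obtain ⟨j0, hj0⟩ := hz
    have hprod : HasProd (fun j : ℕ => (1 : ℂ) - w * q ^ j) 0 := by
      have hev : ∀ᶠ s : Finset ℕ in atTop, ∏ i ∈ s, ((1 : ℂ) - w * q ^ i) = 0 := by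
        filter_upwards [eventually_ge_atTop ({j0} : Finset ℕ)] with s hs
        exact Finset.prod_eq_zero (hs (Finset.mem_singleton_self j0)) hj0
      exact tendsto_const_nhds.congr' (hev.mono fun s hs => hs.symm)
    have : qPochInf q w = 0 := hprod.tprod_eq
    rw [this]
    exact hprod.tendsto_prod_nat
  · push_neg at hz
    have hlog : ∀ _u : Unit, Summable fun j : ℕ => Complex.log ((1 : ℂ) - w * q ^ j) := by
      intro _
      apply Summable.of_norm_bounded_eventually_nat (g := fun j => 3 / 2 * ‖w‖ * ‖q‖ ^ j)
      · exact (summable_geometric_of_lt_one (norm_nonneg q) hq1).mul_left _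
      · have hto : Tendsto (fun j : ℕ => ‖w‖ * ‖q‖ ^ j) atTop (𝓝 0) := by
          have := (tendsto_pow_atTop_nhds_zero_of_lt_one (norm_nonneg q) hq1).const_mul ‖w‖
          simpa using this
        filter_upwards [hto.eventually_lt_const (by norm_num : (0:ℝ) < 1/2)] with j hj
        have hb : ‖-(w * q ^ j)‖ ≤ 1 / 2 := by
          rw [norm_neg, norm_mul, norm_pow]; exact hj.le
        calc ‖Complex.log (1 - w * q ^ j)‖ = ‖Complex.log (1 + -(w * q ^ j))‖ := by
              rw [sub_eq_add_neg]
          _ ≤ 3 / 2 * ‖-(w * q ^ j)‖ := Complex.norm_log_one_add_half_le_self hb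
          _ = 3 / 2 * ‖w‖ * ‖q‖ ^ j := by rw [norm_neg, norm_mul, norm_pow]; ring
    have hm : Multipliable (fun j : ℕ => (1 : ℂ) - w * q ^ j) :=
      Complex.multipliable_of_summable_log (hlog ())
    rw [qPochInf]
    exact hm.hasProd.tendsto_prod_nat

lemma qPochInf_ne_zero (hq1 : ‖q‖ < 1) {w : ℂ} (hw : ‖w‖ < 1) : qPochInf q w ≠ 0 := by
  have hz : ∀ j : ℕ, (1 : ℂ) - w * q ^ j ≠ 0 := by
    intro j
    apply one_sub_ne
    rw [norm_mul, norm_pow]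
    calc ‖w‖ * ‖q‖ ^ j ≤ ‖w‖ * 1 := by
          gcongr; exact pow_le_one₀ (norm_nonneg q) hq1.le
      _ < 1 := by simpa using hw
  have hlog : ∀ _u : Unit, Summable fun j : ℕ => Complex.log ((1 : ℂ) - w * q ^ j) := by
    intro _
    apply Summable.of_norm_bounded_eventually_nat (g := fun j => 3 / 2 * ‖w‖ * ‖q‖ ^ j)
    · exact (summable_geometric_of_lt_one (norm_nonneg q) hq1).mul_left _
    · have hto : Tendsto (fun j : ℕ => ‖w‖ * ‖q‖ ^ j) atTop (𝓝 0) := by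
        have := (tendsto_pow_atTop_nhds_zero_of_lt_one (norm_nonneg q) hq1).const_mul ‖w‖
        simpa using this
      filter_upwards [hto.eventually_lt_const (by norm_num : (0:ℝ) < 1/2)] with j hj
      have hb : ‖-(w * q ^ j)‖ ≤ 1 / 2 := by
        rw [norm_neg, norm_mul, norm_pow]; exact hj.le
      calc ‖Complex.log (1 - w * q ^ j)‖ = ‖Complex.log (1 + -(w * q ^ j))‖ := by
            rw [sub_eq_add_neg]
        _ ≤ 3 / 2 * ‖-(w * q ^ j)‖ := Complex.norm_log_one_add_half_le_self hb
        _ = 3 / 2 * ‖w‖ * ‖q‖ ^ j := by rw [norm_neg, norm_mul, norm_pow]; ring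
  have h2 := Complex.cexp_tsum_eq_tprod hz (hlog ())
  rw [qPochInf, ← h2]
  exact Complex.exp_ne_zero _

lemma funEq (hq0 : q ≠ 0) (hq1 : ‖q‖ < 1) (x y : ℂ) (s : ℂ) (hs : ‖x * s‖ < 1) :
    (1 - x * s) * (∑' n : ℕ, cauchyP q x y n * s ^ n / qPoch q q n) =
      (1 - y * s) * (∑' n : ℕ, cauchyP q x y n * (q * s) ^ n / qPoch q q n) := by
  have hs' : ‖x * (q * s)‖ < 1 := by
    calc ‖x * (q * s)‖ = ‖q‖ * ‖x * s‖ := by rw [show x * (q * s) = q * (x * s) by ring,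
          norm_mul]
      _ ≤ 1 * ‖x * s‖ := by gcongr
      _ < 1 := by simpa using hs
  have hu : Summable (fun n : ℕ => cauchyP q x y n * s ^ n / qPoch q q n) :=
    (summable_g_norm hq0 hq1 x y s hs).of_norm
  have hu' : Summable (fun n : ℕ => cauchyP q x y n * (q * s) ^ n / qPoch q q n) :=
    (summable_g_norm hq0 hq1 x y (q * s) hs').of_norm
  have hdiff : ∀ n : ℕ,
      (cauchyP q x y (n+1) * s ^ (n+1) / qPoch q q (n+1) -
        cauchyP q x y (n+1) * (q * s) ^ (n+1) / qPoch q q (n+1)) =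
      x * s * (cauchyP q x y n * s ^ n / qPoch q q n) -
        y * s * (cauchyP q x y n * (q * s) ^ n / qPoch q q n) := by
    intro n
    have hqn : qPoch q q n ≠ 0 := qPoch_ne_zero hq1 hq1 n
    have hqn1 : (1:ℂ) - q * q ^ n ≠ 0 := by
      apply one_sub_ne
      rw [norm_mul, norm_pow]
      calc ‖q‖ * ‖q‖ ^ n ≤ ‖q‖ * 1 := by
            gcongr; exact pow_le_one₀ (norm_nonneg q) hq1.le
        _ < 1 := by simpa using hq1
    rw [cauchyP_succ, qPoch_succ]
    have hQ : qPoch q q n * (qPoch q q n)⁻¹ = 1 := mul_inv_cancel₀ hqn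
    rw [div_sub_div_same, div_eq_iff (mul_ne_zero hqn hqn1)]
    linear_combination (-(cauchyP q x y n * s ^ (n+1) * (1 - q * q ^ n) * (x - q ^ n * y))) * hQ
  have hsub : Summable (fun n : ℕ => cauchyP q x y n * s ^ n / qPoch q q n -
      cauchyP q x y n * (q * s) ^ n / qPoch q q n) := hu.sub hu'
  have h0 : (∑' n : ℕ, (cauchyP q x y n * s ^ n / qPoch q q n -
      cauchyP q x y n * (q * s) ^ n / qPoch q q n)) =
      (cauchyP q x y 0 * s ^ 0 / qPoch q q 0 - cauchyP q x y 0 * (q * s) ^ 0 / qPoch q q 0) +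
      ∑' n : ℕ, (cauchyP q x y (n+1) * s ^ (n+1) / qPoch q q (n+1) -
        cauchyP q x y (n+1) * (q * s) ^ (n+1) / qPoch q q (n+1)) :=
    ((Summable.sum_add_tsum_nat_add 1 hsub).symm).trans (by
      rw [Finset.sum_range_one])
  have hmain : (∑' n : ℕ, cauchyP q x y n * s ^ n / qPoch q q n) -
      (∑' n : ℕ, cauchyP q x y n * (q * s) ^ n / qPoch q q n) =
      x * s * (∑' n : ℕ, cauchyP q x y n * s ^ n / qPoch q q n) -
      y * s * (∑' n : ℕ, cauchyP q x y n * (q * s) ^ n / qPoch q q n) := by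
    rw [← Summable.tsum_sub hu hu', h0, tsum_congr hdiff,
      Summable.tsum_sub (hu.mul_left (x*s)) (hu'.mul_left (y*s)), tsum_mul_left, tsum_mul_left,
      show cauchyP q x y 0 = 1 from Finset.prod_range_zero _,
      show qPoch q q 0 = 1 from Finset.prod_range_zero _]
    ring
  linear_combination hmain

lemma qbinom_thm (hq0 : q ≠ 0) (hq1 : ‖q‖ < 1) (x y t : ℂ) (hxt : ‖x * t‖ < 1) :
    ∑' n : ℕ, cauchyP q x y n * t ^ n / qPoch q q n =
      qPochInf q (y * t) / qPochInf q (x * t) := by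
  set G : ℂ → ℂ := fun s => ∑' n : ℕ, cauchyP q x y n * s ^ n / qPoch q q n with hG
  have hxs : ∀ N : ℕ, ‖x * (q ^ N * t)‖ < 1 := by
    intro N
    calc ‖x * (q ^ N * t)‖ = ‖q‖ ^ N * ‖x * t‖ := by
          rw [show x * (q ^ N * t) = q ^ N * (x * t) by ring, norm_mul, norm_pow]
      _ ≤ 1 * ‖x * t‖ := by
          gcongr
          exact pow_le_one₀ (norm_nonneg q) hq1.le
      _ < 1 := by simpa using hxt
  have hIter : ∀ N : ℕ, (∏ j ∈ Finset.range N, (1 - x * t * q ^ j)) * G t =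
      (∏ j ∈ Finset.range N, (1 - y * t * q ^ j)) * G (q ^ N * t) := by
    intro N
    induction N with
    | zero => simp
    | succ N ih =>
      have h := funEq hq0 hq1 x y (q ^ N * t) (hxs N)
      have harg : q * (q ^ N * t) = q ^ (N + 1) * t := by ring
      rw [harg] at h
      rw [Finset.prod_range_succ, Finset.prod_range_succ]
      have hGdef : ∀ s : ℂ, G s = ∑' n : ℕ, cauchyP q x y n * s ^ n / qPoch q q n :=
        fun s => rfl
      simp only [hGdef] at ih ⊢
      linear_combination (1 - x * t * q ^ N) * ih +
        (∏ j ∈ Finset.range N, (1 - y * t * q ^ j)) * h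
  have hGlim : Tendsto (fun N : ℕ => G (q ^ N * t)) atTop (𝓝 1) := by
    have hbd : Summable (fun n : ℕ => ‖cauchyP q x y n * t ^ n / qPoch q q n‖) :=
      summable_g_norm hq0 hq1 x y t hxt
    have hab : ∀ n : ℕ, Tendsto (fun N : ℕ => cauchyP q x y n * (q ^ N * t) ^ n / qPoch q q n)
        atTop (𝓝 (if n = 0 then (1:ℂ) else 0)) := by
      intro n
      rcases n with _ | m
      · have hc : cauchyP q x y 0 = 1 := Finset.prod_range_zero _
        have hp : qPoch q q 0 = 1 := Finset.prod_range_zero _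
        simpa [hc, hp] using (tendsto_const_nhds : Tendsto (fun _ : ℕ => (1:ℂ)) atTop (𝓝 1))
      · have hnorm : ‖q ^ (m + 1)‖ < 1 := by
          rw [norm_pow]
          exact pow_lt_one₀ (norm_nonneg q) hq1 (Nat.succ_ne_zero m)
        have heq : (fun N : ℕ => cauchyP q x y (m+1) * (q ^ N * t) ^ (m+1) / qPoch q q (m+1)) =
            fun N : ℕ => (cauchyP q x y (m+1) * t ^ (m+1) / qPoch q q (m+1)) * (q ^ (m+1)) ^ N := by
          funext N
          ring
        rw [heq, if_neg (Nat.succ_ne_zero m)]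
        have := (tendsto_pow_atTop_nhds_zero_of_norm_lt_one hnorm).const_mul
          (cauchyP q x y (m+1) * t ^ (m+1) / qPoch q q (m+1))
        simpa using this
    have hbound : ∀ᶠ N : ℕ in atTop, ∀ n : ℕ,
        ‖cauchyP q x y n * (q ^ N * t) ^ n / qPoch q q n‖ ≤
          ‖cauchyP q x y n * t ^ n / qPoch q q n‖ := by
      apply Filter.Eventually.of_forall
      intro N n
      have heq : cauchyP q x y n * (q ^ N * t) ^ n / qPoch q q n =
          (cauchyP q x y n * t ^ n / qPoch q q n) * (q ^ N) ^ n := by ring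
      rw [heq, norm_mul]
      apply mul_le_of_le_one_right (norm_nonneg _)
      rw [norm_pow, norm_pow]
      exact pow_le_one₀ (pow_nonneg (norm_nonneg q) N) (pow_le_one₀ (norm_nonneg q) hq1.le)
    have h := tendsto_tsum_of_dominated_convergence (𝓕 := (atTop : Filter ℕ))
      (f := fun N n => cauchyP q x y n * (q ^ N * t) ^ n / qPoch q q n)
      (g := fun n => if n = 0 then (1:ℂ) else 0)
      (bound := fun n => ‖cauchyP q x y n * t ^ n / qPoch q q n‖) hbd hab hbound
    have hsum : ∑' n : ℕ, (if n = 0 then (1:ℂ) else 0) = 1 := tsum_ite_eq 0 1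
    rw [hsum] at h
    exact h
  have hx := tendsto_prodN hq1 (x * t)
  have hyt := tendsto_prodN hq1 (y * t)
  have hL : Tendsto (fun N : ℕ => (∏ j ∈ Finset.range N, (1 - x * t * q ^ j)) * G t)
      atTop (𝓝 (qPochInf q (x * t) * G t)) := hx.mul_const _
  have hR : Tendsto (fun N : ℕ => (∏ j ∈ Finset.range N, (1 - y * t * q ^ j)) * G (q ^ N * t))
      atTop (𝓝 (qPochInf q (y * t) * 1)) := hyt.mul hGlim
  have heq : qPochInf q (x * t) * G t = qPochInf q (y * t) * 1 := by
    apply tendsto_nhds_unique _ hR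
    exact (tendsto_congr fun N => hIter N).mp hL
  have hne : qPochInf q (x * t) ≠ 0 := qPochInf_ne_zero hq1 hxt
  show G t = _
  rw [eq_div_iff hne]
  linear_combination heq


set_option maxHeartbeats 1000000 in
theorem stmt2Aux (q : ℂ) (hq0 : q ≠ 0) (hq1 : ‖q‖ < 1) (α a x y z t : ℂ)
    (hxt : ‖x * t‖ < 1) (hzt : ‖z * t‖ < 1) (hztα : ‖z * t * q ^ α‖ < 1)
    (hy : ∀ n : ℕ, 1 ≤ n → ∀ j : ℕ, j < n → y ≠ x * q ^ ((j : ℤ) + 1 - (n : ℤ))) :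
    Summable (fun n : ℕ => ‖cauchyP q x y n * t ^ n / qPoch q q n *
        ∑ k ∈ Finset.range (n + 1), qBinom q n k * genQBinom q α k * (-1) ^ k *
          q ^ ((k : ℤ) * ((k : ℤ) - (n : ℤ))) * qPoch q a k * z ^ k /
          cauchyP q y (x * q ^ (1 - (n : ℤ))) k‖) ∧
    ∑' n : ℕ, cauchyP q x y n * t ^ n / qPoch q q n *
        ∑ k ∈ Finset.range (n + 1), qBinom q n k * genQBinom q α k * (-1) ^ k *
          q ^ ((k : ℤ) * ((k : ℤ) - (n : ℤ))) * qPoch q a k * z ^ k /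
          cauchyP q y (x * q ^ (1 - (n : ℤ))) k =
      qPochInf q (y * t) / qPochInf q (x * t) *
        Phi21 q (-(q ^ (-α))) a (-q) (z * t * q ^ α) := by
  have hf : Summable (fun k : ℕ => ‖qPoch q (-(q ^ (-α))) k * qPoch q a k /
      (qPoch q (-q) k * qPoch q q k) * (z * t * q ^ α) ^ k‖) :=
    summable_f_norm hq0 hq1 α a z t hztα
  have hg : Summable (fun n : ℕ => ‖cauchyP q x y n * t ^ n / qPoch q q n‖) :=
    summable_g_norm hq0 hq1 x y t hxt
  have hterm := term_eq hq0 hq1 α a x y z t hy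
  constructor
  · exact (summable_norm_sum_mul_range_of_summable_norm hf hg).congr
      (fun n => congrArg norm (hterm n).symm)
  · rw [tsum_congr hterm, ← tsum_mul_tsum_eq_tsum_sum_range_of_summable_norm hf hg,
      qbinom_thm hq0 hq1 x y t hxt, Phi21, mul_comm]

end Stmt2Aux

/-- Generating function recovering the Cauchy polynomials. -/
theorem stmt2 (q : ℂ) (hq0 : q ≠ 0) (hq1 : ‖q‖ < 1) (α a x y z t : ℂ)
    (hxt : ‖x * t‖ < 1) (hzt : ‖z * t‖ < 1) (hztα : ‖z * t * q ^ α‖ < 1)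
    (hy : ∀ n : ℕ, 1 ≤ n → ∀ j : ℕ, j < n → y ≠ x * q ^ ((j : ℤ) + 1 - (n : ℤ))) :
    Summable (fun n : ℕ => ‖cauchyP q x y n * t ^ n / qPoch q q n *
        ∑ k ∈ Finset.range (n + 1), qBinom q n k * genQBinom q α k * (-1) ^ k *
          q ^ ((k : ℤ) * ((k : ℤ) - (n : ℤ))) * qPoch q a k * z ^ k /
          cauchyP q y (x * q ^ (1 - (n : ℤ))) k‖) ∧
    ∑' n : ℕ, cauchyP q x y n * t ^ n / qPoch q q n *
        ∑ k ∈ Finset.range (n + 1), qBinom q n k * genQBinom q α k * (-1) ^ k *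
          q ^ ((k : ℤ) * ((k : ℤ) - (n : ℤ))) * qPoch q a k * z ^ k /
          cauchyP q y (x * q ^ (1 - (n : ℤ))) k =
      qPochInf q (y * t) / qPochInf q (x * t) *
        Phi21 q (-(q ^ (-α))) a (-q) (z * t * q ^ α) :=
  stmt2Aux q hq0 hq1 α a x y z t hxt hzt hztα hy

end
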